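/- Let (X, ⪯) be a partially ordered set, x₀ ∈ X, and η : X → ℝ ∪ {±∞} a function monotone with respect to ⪯ (i.e., x₁ ⪯ x₂ implies η(x₁) ≤ η(x₂)). For x ∈ X write S(x) = {x' ∈ X : x' ⪯ x}. Assume: (A) −∞ < inf{η(x) : x ∈ S(x₀)} < +∞; (B) for any x ∈ S(x₀)\{x₀} with η(x) finite and any x' ∈ S(x)\{x}, one has η(x) > η(x'); (C) for any sequence (xₙ) ⊂ S(x₀) with xₙ ∈ S(xₙ₋₁)\{xₙ₋₁} for all n and η(xₙ) − inf{η(x) : x ∈ S(xₙ₋₁)} → 0, there exists u ∈ X with u ∈ S(xₙ) for all n. Then there exists x̂ ∈ X such that x̂ ∈ S(x₀) and S(x̂) = {x̂}. -/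

import Mathlib

open Filter Topology

theorem partial_order_principle {X : Type*} [PartialOrder X] (x₀ : X) (η : X → EReal)
    (hmono : ∀ x₁ x₂ : X, x₁ ≤ x₂ → η x₁ ≤ η x₂)
    (hA : ⊥ < sInf (η '' {x | x ≤ x₀}) ∧ sInf (η '' {x | x ≤ x₀}) < ⊤)
    (hB : ∀ x, x ≤ x₀ → x ≠ x₀ → η x ≠ ⊥ → η x ≠ ⊤ →
      ∀ x', x' ≤ x → x' ≠ x → η x' < η x)
    (hC : ∀ x : ℕ → X, x 0 = x₀ → (∀ n, x (n + 1) ≤ x n ∧ x (n + 1) ≠ x n) →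
      Tendsto (fun n => η (x (n + 1)) - sInf (η '' {x' | x' ≤ x n})) atTop (nhds (0 : EReal)) →
      ∃ u : X, ∀ n, u ≤ x n) :
    ∃ xhat : X, xhat ≤ x₀ ∧ ∀ x', x' ≤ xhat → x' = xhat := by
  classical
  set m : X → EReal := fun x => sInf (η '' {x' | x' ≤ x}) with hm
  have hm_ge : ∀ z x : X, z ≤ x → m x ≤ η z := fun z x h => sInf_le ⟨z, h, rfl⟩
  have hm_mono : ∀ x y : X, x ≤ y → m y ≤ m x := by
    intro x y hxy
    exact sInf_le_sInf (Set.image_mono (fun z hz => le_trans hz hxy))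
  set ε : ℕ → ℝ := fun n => (1/2 : ℝ)^n with hε
  have hεpos : ∀ n, (0:ℝ) < ε n := fun n => pow_pos (by norm_num) n
  set P : ℕ → X → X → Prop :=
    fun n x y => y ≤ x ∧ y ≠ x ∧ η y < m x + (ε n : EReal) with hP
  set f : ℕ → X → X := fun n x => if h : ∃ y, P n x y then h.choose else x with hf
  set seq : ℕ → X := fun n => Nat.rec x₀ (fun n xn => f n xn) n with hseq
  have hseq0 : seq 0 = x₀ := rfl
  have hseqS : ∀ n, seq (n+1) = f n (seq n) := fun n => rfl
  have hstep : ∀ n, (∃ y, P n (seq n) y) → P n (seq n) (seq (n+1)) := by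
    intro n h
    rw [hseqS, hf]
    simp only [h, dif_pos]
    exact h.choose_spec
  have hstep' : ∀ n, ¬(∃ y, P n (seq n) y) → seq (n+1) = seq n := by
    intro n h
    rw [hseqS, hf]
    simp only [h, dif_neg, not_false_iff]
  have hdec : ∀ n, seq (n+1) ≤ seq n := by
    intro n
    by_cases h : ∃ y, P n (seq n) y
    · exact (hstep n h).1
    · exact le_of_eq (hstep' n h)
  have hle0 : ∀ n, seq n ≤ x₀ := by
    intro n
    induction n with
    | zero => exact le_refl _
    | succ n ih => exact le_trans (hdec n) ih
  have hbot : ∀ n, ⊥ < m (seq n) := fun n => lt_of_lt_of_le hA.1 (hm_mono _ _ (hle0 n))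
  have htop : ∀ n, m (seq n) < ⊤ := by
    intro n
    induction n with
    | zero => exact hA.2
    | succ n ih =>
      by_cases h : ∃ y, P n (seq n) y
      · refine lt_of_le_of_lt (le_trans (hm_ge _ _ (le_refl (seq (n+1)))) (le_of_lt (hstep n h).2.2)) ?_
        exact EReal.add_lt_top (ne_of_lt ih) (EReal.coe_ne_top _)
      · rw [hstep' n h]; exact ih
  by_cases hstall : ∃ n, ¬ ∃ y, P n (seq n) y
  · obtain ⟨n, hn⟩ := hstall
    refine ⟨seq n, hle0 n, ?_⟩
    intro z hz
    by_contra hne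
    apply hn
    -- m (seq n) is finite, find w with η w < m (seq n) + ε n
    have hfin : ((m (seq n)).toReal : EReal) = m (seq n) :=
      EReal.coe_toReal (ne_of_lt (htop n)) (ne_of_gt (hbot n))
    have hlt : m (seq n) < m (seq n) + (ε n : EReal) := by
      rw [← hfin, ← EReal.coe_add]
      exact EReal.coe_lt_coe_iff.2 (lt_add_of_pos_right _ (hεpos n))
    obtain ⟨v, ⟨w, hw, rfl⟩, hv⟩ := sInf_lt_iff.1 hlt
    by_cases hwx : w = seq n
    · exact ⟨z, hz, hne, lt_of_le_of_lt (hmono z w (hwx ▸ hz)) hv⟩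
    · exact ⟨w, hw, hwx, hv⟩
  · push_neg at hstall
    have hPseq : ∀ n, P n (seq n) (seq (n+1)) := fun n => hstep n (hstall n)
    have hηbot : ∀ n, ⊥ < η (seq (n+1)) :=
      fun n => lt_of_lt_of_le (hbot n) (hm_ge _ _ (hPseq n).1)
    have hηtop : ∀ n, η (seq (n+1)) < ⊤ := by
      intro n
      exact lt_of_lt_of_le (hPseq n).2.2
        (le_of_lt (EReal.add_lt_top (ne_of_lt (htop n)) (EReal.coe_ne_top _)))
    have htend : Tendsto (fun n => η (seq (n + 1)) - m (seq n)) atTop (nhds (0 : EReal)) := by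
      have key : ∀ n, η (seq (n+1)) - m (seq n)
          = (((η (seq (n+1))).toReal - (m (seq n)).toReal : ℝ) : EReal) := by
        intro n
        rw [EReal.coe_sub, EReal.coe_toReal (ne_of_lt (hηtop n)) (ne_of_gt (hηbot n)),
          EReal.coe_toReal (ne_of_lt (htop n)) (ne_of_gt (hbot n))]
      have h0 : ∀ n, (0:ℝ) ≤ (η (seq (n+1))).toReal - (m (seq n)).toReal := by
        intro n
        have := hm_ge (seq (n+1)) (seq n) (hPseq n).1
        have h' := EReal.toReal_le_toReal this (ne_of_gt (hbot n)) (ne_of_lt (hηtop n))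
        linarith
      have h2 : ∀ n, (η (seq (n+1))).toReal - (m (seq n)).toReal ≤ ε n := by
        intro n
        have hlt := (hPseq n).2.2
        have : m (seq n) + (ε n : EReal)
            = (((m (seq n)).toReal + ε n : ℝ) : EReal) := by
          rw [EReal.coe_add, EReal.coe_toReal (ne_of_lt (htop n)) (ne_of_gt (hbot n))]
        rw [this] at hlt
        have h' := EReal.toReal_le_toReal (le_of_lt hlt) (ne_of_gt (hηbot n)) (EReal.coe_ne_top _)
        rw [EReal.toReal_coe] at h'
        linarith
      have hreal : Tendsto (fun n => (η (seq (n+1))).toReal - (m (seq n)).toReal)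
          atTop (nhds (0:ℝ)) := by
        refine squeeze_zero h0 h2 ?_
        exact tendsto_pow_atTop_nhds_zero_of_lt_one (by norm_num) (by norm_num)
      have := (EReal.tendsto_coe (a := (0:ℝ))).2 hreal
      simp only [key]
      simpa using this
    obtain ⟨u, hu⟩ := hC seq hseq0 (fun n => ⟨(hPseq n).1, (hPseq n).2.1⟩) htend
    have hux₀ : u ≤ x₀ := hu 0
    have hune : u ≠ x₀ := by
      intro h
      apply (hPseq 0).2.1
      exact le_antisymm (hPseq 0).1 (by show x₀ ≤ seq 1; rw [← h]; exact hu 1)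
    have hηubot : ⊥ < η u := lt_of_lt_of_le hA.1 (hm_ge u x₀ hux₀)
    have hηutop : η u < ⊤ := lt_of_le_of_lt (hmono u (seq 1) (hu 1)) (hηtop 0)
    refine ⟨u, hux₀, ?_⟩
    intro x' hx'
    by_contra hne
    have hBu := hB u hux₀ hune (ne_of_gt hηubot) (ne_of_lt hηutop) x' hx' hne
    -- η u < η x' + ε n for all n
    have hkey : ∀ n, η u < η x' + (ε n : EReal) := by
      intro n
      calc η u ≤ η (seq (n+1)) := hmono u (seq (n+1)) (hu (n+1))
        _ < m (seq n) + (ε n : EReal) := (hPseq n).2.2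
        _ ≤ η x' + (ε n : EReal) := by
            gcongr
            exact hm_ge x' (seq n) (le_trans hx' (hu n))
    -- η x' is finite (it is < η u < ⊤ and > ⊥ by hkey with any n)
    have hx'bot : η x' ≠ ⊥ := by
      intro h
      have := hkey 0
      rw [h] at this
      simp at this
    set a := (η u).toReal with ha
    set b := (η x').toReal with hb
    have hau : (a : EReal) = η u := EReal.coe_toReal (ne_of_lt hηutop) (ne_of_gt hηubot)
    have hbx : (b : EReal) = η x' := EReal.coe_toReal (ne_of_lt (lt_trans hBu hηutop)) hx'bot
    have hba : b < a := by
      rw [← hau, ← hbx] at hBu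
      exact_mod_cast hBu
    obtain ⟨n, hn⟩ := exists_pow_lt_of_lt_one (sub_pos.2 hba) (by norm_num : (1/2:ℝ) < 1)
    have := hkey n
    rw [← hau, ← hbx, ← EReal.coe_add] at this
    have hlt : a < b + ε n := by exact_mod_cast this
    have : ε n < a - b := hn
    linarith
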